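/- The function μ(θ) = 1/2 + (1/4)|sin θ| cot²θ · log((1+|sin θ|)/(1-|sin θ|)) satisfies 1/2 ≤ μ(θ) ≤ 1 for all θ; moreover μ is decreasing on [0, π/2] and increasing on [π/2, π] (with μ extended by continuity to μ(nπ) = 1). -/

import Mathlib

open Real Set

/-- The function `μ(θ) = 1/2 + (1/4)|sin θ| cot²θ log((1+|sin θ|)/(1-|sin θ|))`,
extended by continuity to `μ(nπ) = 1`. -/
noncomputable def muBer (θ : ℝ) : ℝ :=
  if Real.sin θ = 0 then 1
  else 1/2 + (1/4) * |Real.sin θ| * (Real.cos θ / Real.sin θ) ^ 2 *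
    Real.log ((1 + |Real.sin θ|) / (1 - |Real.sin θ|))

/-- Auxiliary logarithm function. -/
noncomputable def Lber (s : ℝ) : ℝ := Real.log ((1 + s) / (1 - s))

lemma Lber_hasDerivAt {x : ℝ} (hx : x ∈ Set.Ioo (-1:ℝ) 1) :
    HasDerivAt Lber (2 / (1 - x^2)) x := by
  obtain ⟨h1, h2⟩ := hx
  have hp : (0:ℝ) < 1 + x := by linarith
  have hm : (0:ℝ) < 1 - x := by linarith
  have hA : HasDerivAt (fun s : ℝ => Real.log (1 + s)) ((1 + x)⁻¹) x := by
    simpa using ((hasDerivAt_id x).const_add 1).log hp.ne'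
  have hB : HasDerivAt (fun s : ℝ => Real.log (1 - s)) ((1 - x)⁻¹ * (-1)) x :=
    (Real.hasDerivAt_log hm.ne').comp x ((hasDerivAt_id x).const_sub 1)
  have hC := hA.sub hB
  have heq : Lber =ᶠ[nhds x] (fun s => Real.log (1 + s) - Real.log (1 - s)) := by
    filter_upwards [isOpen_Ioo.mem_nhds (show x ∈ Set.Ioo (-1:ℝ) 1 from ⟨h1, h2⟩)] with y hy
    rw [Lber, Real.log_div (by linarith [hy.1]) (by linarith [hy.2])]
  have := hC.congr_of_eventuallyEq heq
  refine this.congr_deriv ?_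
  have hsq : 1 - x^2 ≠ 0 := by nlinarith
  have hp' : 1 + x ≠ 0 := hp.ne'
  have hm' : 1 - x ≠ 0 := hm.ne'
  field_simp
  ring

lemma Lber_zero : Lber 0 = 0 := by simp [Lber]

lemma Lber_sub_mono : MonotoneOn (fun s => Lber s - 2*s) (Set.Ioo (-1:ℝ) 1) := by
  have hd : ∀ x ∈ Set.Ioo (-1:ℝ) 1,
      HasDerivAt (fun s => Lber s - 2*s) (2/(1-x^2) - 2) x := by
    intro x hx
    exact (Lber_hasDerivAt hx).sub (by simpa using (hasDerivAt_id x).const_mul (2:ℝ))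
  apply monotoneOn_of_deriv_nonneg (convex_Ioo _ _)
  · exact fun x hx => (hd x hx).continuousAt.continuousWithinAt
  · rw [interior_Ioo]; exact fun x hx => (hd x hx).differentiableAt.differentiableWithinAt
  · rw [interior_Ioo]
    intro x hx
    rw [(hd x hx).deriv]
    have h2 : 0 < 1 - x^2 := by nlinarith [hx.1, hx.2]
    have : (2:ℝ) ≤ 2/(1-x^2) := by
      rw [le_div_iff₀ h2]; nlinarith [sq_nonneg x]
    linarith

lemma Lber_ge {s : ℝ} (hs : s ∈ Set.Ico (0:ℝ) 1) : 2*s ≤ Lber s := by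
  have h0 : (0:ℝ) ∈ Set.Ioo (-1:ℝ) 1 := by norm_num
  have hsm : s ∈ Set.Ioo (-1:ℝ) 1 := ⟨by linarith [hs.1], hs.2⟩
  have := Lber_sub_mono h0 hsm hs.1
  simp only [Lber_zero] at this
  linarith

lemma Lber_nonneg {s : ℝ} (hs : s ∈ Set.Icc (0:ℝ) 1) : 0 ≤ Lber s := by
  rcases eq_or_lt_of_le hs.2 with h1 | h1
  · subst h1; simp [Lber]
  · linarith [Lber_ge ⟨hs.1, h1⟩, hs.1]

lemma Lber_upper {s : ℝ} (hs : s ∈ Set.Ico (0:ℝ) 1) : (1 - s^2) * Lber s ≤ 2*s := by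
  have hd : ∀ x ∈ Set.Ioo (-1:ℝ) 1,
      HasDerivAt (fun s => 2*s - (1-s^2)*Lber s) (2*x*Lber x) x := by
    intro x hx
    have hsq : 1 - x^2 ≠ 0 := by nlinarith [hx.1, hx.2]
    have h1 : HasDerivAt (fun s : ℝ => 1 - s^2) (-(2*x)) x := by
      simpa using (hasDerivAt_pow 2 x).const_sub 1
    have h2 := h1.mul (Lber_hasDerivAt hx)
    have h3 := HasDerivAt.sub (by simpa using (hasDerivAt_id x).const_mul (2:ℝ)) h2
    refine h3.congr_deriv ?_
    field_simp
    try ring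
  have hmono : MonotoneOn (fun s => 2*s - (1-s^2)*Lber s) (Set.Ico (0:ℝ) 1) := by
    apply monotoneOn_of_deriv_nonneg (convex_Ico _ _)
    · intro x hx
      exact (hd x ⟨by linarith [hx.1], hx.2⟩).continuousAt.continuousWithinAt
    · rw [interior_Ico]
      exact fun x hx => (hd x ⟨by linarith [hx.1], hx.2⟩).differentiableAt.differentiableWithinAt
    · rw [interior_Ico]
      intro x hx
      rw [(hd x ⟨by linarith [hx.1], hx.2⟩).deriv]
      have hL := Lber_nonneg ⟨le_of_lt hx.1, le_of_lt hx.2⟩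
      exact mul_nonneg (mul_nonneg (by norm_num) (le_of_lt hx.1)) hL
  have := hmono (Set.left_mem_Ico.mpr one_pos) hs hs.1
  simp only [Lber_zero] at this
  linarith

/-- The profile function: `muBer θ = fBer |sin θ|`. -/
noncomputable def fBer (s : ℝ) : ℝ :=
  if s = 0 then 1
  else 1/2 + (1/4) * s * ((1 - s^2)/s^2) * Lber s

lemma fBer_eq {s : ℝ} (hs : s ≠ 0) : fBer s = 1/2 + ((1 - s^2) * Lber s)/(4*s) := by
  rw [fBer, if_neg hs]
  field_simp

lemma fBer_zero : fBer 0 = 1 := if_pos rfl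

lemma fBer_one : fBer 1 = 1/2 := by
  rw [fBer_eq one_ne_zero]; norm_num

lemma fBer_le_one {s : ℝ} (hs : s ∈ Set.Icc (0:ℝ) 1) : fBer s ≤ 1 := by
  by_cases h0 : s = 0
  · subst h0; rw [fBer_zero]
  by_cases h1 : s = 1
  · subst h1; rw [fBer_one]; norm_num
  have hsp : 0 < s := lt_of_le_of_ne hs.1 (Ne.symm h0)
  have hub := Lber_upper ⟨hs.1, lt_of_le_of_ne hs.2 h1⟩
  rw [fBer_eq h0]
  have hdiv : ((1 - s^2) * Lber s)/(4*s) ≤ (2*s)/(4*s) :=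
    div_le_div_of_nonneg_right hub (by positivity) |>.trans_eq rfl
  have h2s : (2*s)/(4*s) = 1/2 := by field_simp; ring
  linarith [hdiv, h2s.le, h2s.ge]

lemma half_le_fBer {s : ℝ} (hs : s ∈ Set.Icc (0:ℝ) 1) : 1/2 ≤ fBer s := by
  by_cases h0 : s = 0
  · subst h0; rw [fBer_zero]; norm_num
  have hsp : 0 < s := lt_of_le_of_ne hs.1 (Ne.symm h0)
  rw [fBer_eq h0]
  have hL := Lber_nonneg hs
  have hnum : 0 ≤ (1 - s^2) * Lber s := mul_nonneg (by nlinarith [hs.2]) hL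
  have : 0 ≤ ((1 - s^2) * Lber s)/(4*s) := div_nonneg hnum (by positivity)
  linarith

lemma fBer_anti_Ioo : AntitoneOn fBer (Set.Ioo (0:ℝ) 1) := by
  have hG : ∀ x ∈ Set.Ioo (0:ℝ) 1, HasDerivAt fBer
      ((1/4) * ((-(x^2)⁻¹ - 1) * Lber x + (x⁻¹ - x) * (2/(1-x^2)))) x := by
    intro x hx
    have hx0 : x ≠ 0 := ne_of_gt hx.1
    have hmem : x ∈ Set.Ioo (-1:ℝ) 1 := ⟨by linarith [hx.1], hx.2⟩
    have h1 : HasDerivAt (fun s : ℝ => s⁻¹ - s) (-(x^2)⁻¹ - 1) x :=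
      (hasDerivAt_inv hx0).sub (hasDerivAt_id x)
    have h2 := (h1.mul (Lber_hasDerivAt hmem)).const_mul (1/4 : ℝ)
    have h3 := h2.const_add (1/2 : ℝ)
    have heq : fBer =ᶠ[nhds x] (fun s => 1/2 + 1/4 * ((s⁻¹ - s) * Lber s)) := by
      filter_upwards [isOpen_Ioo.mem_nhds hx] with y hy
      rw [fBer, if_neg (ne_of_gt hy.1)]
      have hy0 : y ≠ 0 := ne_of_gt hy.1
      field_simp
    exact h3.congr_of_eventuallyEq heq
  apply antitoneOn_of_deriv_nonpos (convex_Ioo _ _)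
  · exact fun x hx => (hG x hx).continuousAt.continuousWithinAt
  · rw [interior_Ioo]; exact fun x hx => (hG x hx).differentiableAt.differentiableWithinAt
  · rw [interior_Ioo]
    intro x hx
    rw [(hG x hx).deriv]
    have hx0 : x ≠ 0 := ne_of_gt hx.1
    have hsq : 1 - x^2 ≠ 0 := by nlinarith [hx.1, hx.2]
    have hL2 := Lber_ge ⟨le_of_lt hx.1, hx.2⟩
    have hL0 := Lber_nonneg ⟨le_of_lt hx.1, le_of_lt hx.2⟩
    have hkey : 2*x ≤ (1 + x^2) * Lber x := by nlinarith [sq_nonneg x]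
    have heq2 : (1/4) * ((-(x^2)⁻¹ - 1) * Lber x + (x⁻¹ - x) * (2/(1-x^2)))
        = (2*x - (1 + x^2) * Lber x)/(4*x^2) := by
      field_simp
      ring
    rw [heq2]
    apply div_nonpos_of_nonpos_of_nonneg (by linarith) (by positivity)

lemma fBer_anti : AntitoneOn fBer (Set.Icc (0:ℝ) 1) := by
  intro x hx y hy hxy
  by_cases hx0 : x = 0
  · subst hx0
    rw [fBer_zero]
    exact fBer_le_one hy
  by_cases hy1 : y = 1
  · subst hy1
    rw [fBer_one]
    exact half_le_fBer hx
  have hy' : y < 1 := lt_of_le_of_ne hy.2 hy1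
  have hxI : x ∈ Set.Ioo (0:ℝ) 1 := ⟨lt_of_le_of_ne hx.1 (Ne.symm hx0), lt_of_le_of_lt hxy hy'⟩
  have hyI : y ∈ Set.Ioo (0:ℝ) 1 := ⟨lt_of_lt_of_le hxI.1 hxy, hy'⟩
  exact fBer_anti_Ioo hxI hyI hxy

lemma muBer_eq (θ : ℝ) : muBer θ = fBer |Real.sin θ| := by
  by_cases h : Real.sin θ = 0
  · rw [muBer, if_pos h, h, abs_zero, fBer_zero]
  · rw [muBer, if_neg h, fBer, if_neg (abs_ne_zero.mpr h), Lber]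
    have hc : (Real.cos θ / Real.sin θ)^2 = (1 - |Real.sin θ|^2)/|Real.sin θ|^2 := by
      rw [sq_abs, div_pow, Real.cos_sq']
    rw [hc]

lemma abs_sin_mem (θ : ℝ) : |Real.sin θ| ∈ Set.Icc (0:ℝ) 1 :=
  ⟨abs_nonneg _, abs_le.mpr ⟨Real.neg_one_le_sin θ, Real.sin_le_one θ⟩⟩

/-- `1/2 ≤ μ(θ) ≤ 1` for all `θ`; moreover `μ` is decreasing on `[0, π/2]` and
increasing on `[π/2, π]`. -/
theorem muBer_bounds_and_monotone :
    (∀ θ : ℝ, 1/2 ≤ muBer θ ∧ muBer θ ≤ 1) ∧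
    AntitoneOn muBer (Set.Icc 0 (Real.pi / 2)) ∧
    MonotoneOn muBer (Set.Icc (Real.pi / 2) Real.pi) := by
  have pi_pos := Real.pi_pos
  refine ⟨fun θ => ?_, ?_, ?_⟩
  · rw [muBer_eq]
    exact ⟨half_le_fBer (abs_sin_mem θ), fBer_le_one (abs_sin_mem θ)⟩
  · intro a ha b hb hab
    have hsa : 0 ≤ Real.sin a :=
      Real.sin_nonneg_of_nonneg_of_le_pi ha.1 (by linarith [ha.2])
    have hsb : 0 ≤ Real.sin b :=
      Real.sin_nonneg_of_nonneg_of_le_pi hb.1 (by linarith [hb.2])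
    have hmono : Real.sin a ≤ Real.sin b :=
      Real.strictMonoOn_sin.monotoneOn ⟨by linarith [ha.1], ha.2⟩
        ⟨by linarith [hb.1], hb.2⟩ hab
    rw [muBer_eq, muBer_eq, abs_of_nonneg hsa, abs_of_nonneg hsb]
    exact fBer_anti ⟨hsa, Real.sin_le_one a⟩ ⟨hsb, Real.sin_le_one b⟩ hmono
  · intro a ha b hb hab
    have hsa : 0 ≤ Real.sin a :=
      Real.sin_nonneg_of_nonneg_of_le_pi (by linarith [ha.1]) ha.2
    have hsb : 0 ≤ Real.sin b :=
      Real.sin_nonneg_of_nonneg_of_le_pi (by linarith [hb.1]) hb.2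
    have hmono : Real.sin b ≤ Real.sin a := by
      rw [← Real.sin_pi_sub a, ← Real.sin_pi_sub b]
      exact Real.strictMonoOn_sin.monotoneOn
        ⟨by linarith [hb.2], by linarith [hb.1]⟩
        ⟨by linarith [ha.2], by linarith [ha.1]⟩ (by linarith)
    rw [muBer_eq, muBer_eq, abs_of_nonneg hsa, abs_of_nonneg hsb]
    exact fBer_anti ⟨hsb, Real.sin_le_one b⟩ ⟨hsa, Real.sin_le_one a⟩ hmono
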